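/- Let l ≥ 1 be an integer and fix κ > 0. For c = (c_1, …, c_l) ∈ [0,∞)^l, let η(c) > 0 be the unique positive solution of η·∏_{k=1}^{l}(c_k + η) = κ (i.e. ∏_{k=0}^{l}(c_k + η) = κ with c_0 = 0), and define μ(c) = (l+1)·η(c) − ∑_{k=0}^{l} c_k·log(c_k + η(c)). Then μ is differentiable in c and for every k ∈ {1, …, l}: ∂μ/∂c_k = − log(c_k + η(c)) − 1. In particular, ∂μ/∂c_k equals − log(c_k + η) up to the additive constant −1. -/

import Mathlib

open Real Filter Topology ContinuousLinearMap

/-- Uniqueness of the positive root. -/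
lemma stmt5_uniq {l : ℕ} (x : Fin l → ℝ) (hx : ∀ k, 0 ≤ x k) {y₁ y₂ : ℝ}
    (h₁ : 0 < y₁) (h₂ : 0 < y₂)
    (he : y₁ * ∏ k, (x k + y₁) = y₂ * ∏ k, (x k + y₂)) : y₁ = y₂ := by
  have key : ∀ a b : ℝ, 0 < a → a < b →
      a * ∏ k, (x k + a) < b * ∏ k, (x k + b) := by
    intro a b ha hab
    have hPa : 0 < ∏ k, (x k + a) :=
      Finset.prod_pos fun k _ => add_pos_of_nonneg_of_pos (hx k) ha
    have hle : ∏ k, (x k + a) ≤ ∏ k, (x k + b) :=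
      Finset.prod_le_prod (fun k _ => le_of_lt (add_pos_of_nonneg_of_pos (hx k) ha))
        (fun k _ => by linarith)
    calc a * ∏ k, (x k + a) < b * ∏ k, (x k + a) := mul_lt_mul_of_pos_right hab hPa
      _ ≤ b * ∏ k, (x k + b) := mul_le_mul_of_nonneg_left hle (by linarith)
  rcases lt_trichotomy y₁ y₂ with h | h | h
  · exact absurd he (ne_of_lt (key _ _ h₁ h))
  · exact h
  · exact absurd he.symm (ne_of_lt (key _ _ h₂ h))


/-- Fix `κ > 0` and `l ≥ 1`. For `c ∈ [0,∞)^l` let `η c > 0` solve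
`η c · ∏_{k=1}^{l}(c k + η c) = κ` (i.e. `∏_{k=0}^{l}(c k + η) = κ` with `c_0 = 0`),
and set `μ c = (l+1)·η c − ∑_{k=0}^{l} c k · log(c k + η c)` (the `k = 0` term
vanishes since `c_0 = 0`). Then `μ` is differentiable in `c` on `[0,∞)^l` and
`∂μ/∂c_k = −log(c k + η c) − 1`. -/
theorem stmt_5 (l : ℕ) (hl : 1 ≤ l) (κ : ℝ) (hκ : 0 < κ)
    (η : (Fin l → ℝ) → ℝ)
    (hη : ∀ c : Fin l → ℝ, (∀ k, 0 ≤ c k) →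
      0 < η c ∧ η c * ∏ k, (c k + η c) = κ) :
    ∀ c : Fin l → ℝ, (∀ k, 0 ≤ c k) →
      ∃ D : (Fin l → ℝ) →L[ℝ] ℝ,
        HasFDerivWithinAt
          (fun x : Fin l → ℝ =>
            (l + 1 : ℝ) * η x - ∑ k, x k * Real.log (x k + η x))
          D {x : Fin l → ℝ | ∀ k, 0 ≤ x k} c ∧
        ∀ k : Fin l, D (Pi.single k 1) = -Real.log (c k + η c) - 1 := by
  intro c hc
  obtain ⟨he, heq⟩ := hη c hc
  set e := η c with hedef
  -- basic positivity
  set P : ℝ := ∏ j, (c j + e) with hPdef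
  have hP : 0 < P := Finset.prod_pos fun j _ => add_pos_of_nonneg_of_pos (hc j) he
  set Q : Fin l → ℝ := fun j => ∏ i ∈ Finset.univ.erase j, (c i + e) with hQdef
  have hQpos : ∀ j, 0 < Q j := fun j =>
    Finset.prod_pos fun i _ => add_pos_of_nonneg_of_pos (hc i) he
  have hQP : ∀ j, (c j + e) * Q j = P := fun j =>
    Finset.mul_prod_erase Finset.univ (fun i => c i + e) (Finset.mem_univ j)
  set S : ℝ := ∑ j, Q j with hSdef
  have hS : 0 ≤ S := Finset.sum_nonneg fun j _ => (hQpos j).le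
  have hgy : 0 < P + e * S := by positivity
  -- the CLMs
  set fstL := ContinuousLinearMap.fst ℝ (Fin l → ℝ) ℝ with hfstL
  set sndL := ContinuousLinearMap.snd ℝ (Fin l → ℝ) ℝ with hsndL
  set B : ((Fin l → ℝ) × ℝ) →L[ℝ] ℝ :=
    e • (∑ j, Q j • ((ContinuousLinearMap.proj j).comp fstL + sndL)) + P • sndL with hBdef
  have hBapply : ∀ u : Fin l → ℝ, ∀ v : ℝ,
      B (u, v) = (P + e * S) * v + ∑ j, e * Q j * u j := by
    intro u v
    simp only [hBdef, ContinuousLinearMap.add_apply, ContinuousLinearMap.smul_apply,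
      ContinuousLinearMap.sum_apply, ContinuousLinearMap.coe_comp', Function.comp_apply,
      ContinuousLinearMap.coe_fst', ContinuousLinearMap.coe_snd', hfstL, hsndL,
      ContinuousLinearMap.proj_apply, smul_eq_mul, hSdef]
    have h1 : ∑ i, e * (Q i * (u i + v)) = (∑ i, e * Q i * u i) + (∑ i, e * Q i) * v := by
      rw [Finset.sum_mul, ← Finset.sum_add_distrib]
      exact Finset.sum_congr rfl fun i _ => by ring
    rw [Finset.mul_sum, h1, Finset.mul_sum]
    ring
  -- strict derivative of G
  have hG : HasStrictFDerivAt (fun p : (Fin l → ℝ) × ℝ => p.2 * ∏ j, (p.1 j + p.2)) B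
      (c, e) := by
    have hfac : ∀ j : Fin l, HasStrictFDerivAt (fun p : (Fin l → ℝ) × ℝ => p.1 j + p.2)
        ((ContinuousLinearMap.proj j).comp fstL + sndL) (c, e) :=
      fun j => (((ContinuousLinearMap.proj j).comp fstL).hasStrictFDerivAt).add
        (sndL.hasStrictFDerivAt)
    have hprod := HasStrictFDerivAt.finset_prod (u := Finset.univ)
      (fun j _ => hfac j)
    have hmul := (sndL.hasStrictFDerivAt (x := (c, e))).mul hprod
    convert hmul using 1
    all_goals rfl
  -- the continuous linear equiv
  set Gx : (Fin l → ℝ) →L[ℝ] ℝ := ∑ j, (e * Q j) • ContinuousLinearMap.proj j with hGxdef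
  have hGxapply : ∀ u : Fin l → ℝ, Gx u = ∑ j, e * Q j * u j := by
    intro u
    simp [hGxdef, ContinuousLinearMap.sum_apply]
  have hBapply' : ∀ p : (Fin l → ℝ) × ℝ, B p = (P + e * S) * p.2 + Gx p.1 := by
    intro p
    rw [hGxapply p.1]
    exact hBapply p.1 p.2
  set fwdL : ((Fin l → ℝ) × ℝ) →L[ℝ] ((Fin l → ℝ) × ℝ) := fstL.prod B with hfwdL
  set invL : ((Fin l → ℝ) × ℝ) →L[ℝ] ((Fin l → ℝ) × ℝ) :=
    fstL.prod ((P + e * S)⁻¹ • (sndL - Gx.comp fstL)) with hinvL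
  have hinvapply : ∀ p : (Fin l → ℝ) × ℝ, invL p = (p.1, (P + e * S)⁻¹ * (p.2 - Gx p.1)) := by
    intro p
    simp [hinvL, hfstL, hsndL, ContinuousLinearMap.prod_apply, sub_eq_add_neg]
    ring
  have hfwdapply : ∀ p : (Fin l → ℝ) × ℝ, fwdL p = (p.1, B p) := fun p => rfl
  have hli : Function.LeftInverse invL fwdL := by
    intro p
    rw [hfwdapply, hinvapply]
    refine Prod.ext rfl ?_
    show (P + e * S)⁻¹ * (B p - Gx p.1) = p.2
    rw [hBapply' p]
    field_simp
    ring
  have hri : Function.RightInverse invL fwdL := by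
    intro p
    rw [hinvapply, hfwdapply]
    refine Prod.ext rfl ?_
    show B (p.1, (P + e * S)⁻¹ * (p.2 - Gx p.1)) = p.2
    rw [hBapply]
    rw [← hGxapply]
    field_simp
    ring
  set A := ContinuousLinearEquiv.equivOfInverse fwdL invL hli hri with hA
  have hAcoe : (A : ((Fin l → ℝ) × ℝ) →L[ℝ] ((Fin l → ℝ) × ℝ)) = fwdL := rfl
  have hAsymm : (A.symm : ((Fin l → ℝ) × ℝ) →L[ℝ] ((Fin l → ℝ) × ℝ)) = invL := rfl
  -- H and its local inverse
  set H : ((Fin l → ℝ) × ℝ) → ((Fin l → ℝ) × ℝ) :=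
    fun p => (p.1, p.2 * ∏ j, (p.1 j + p.2)) with hHdef
  have hH : HasStrictFDerivAt H (A : ((Fin l → ℝ) × ℝ) →L[ℝ] ((Fin l → ℝ) × ℝ)) (c, e) := by
    rw [hAcoe]
    exact HasStrictFDerivAt.prodMk hasStrictFDerivAt_fst hG
  have hHce : H (c, e) = (c, κ) := by
    simp [hHdef]
    exact heq
  set g := hH.localInverse H _ _ with hgdef
  have hgstrict : HasStrictFDerivAt g
      (A.symm : ((Fin l → ℝ) × ℝ) →L[ℝ] ((Fin l → ℝ) × ℝ)) (c, κ) := by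
    rw [← hHce]
    exact hH.to_localInverse
  have hgck : g (c, κ) = (c, e) := by
    rw [← hHce]
    exact hH.localInverse_apply_image
  have hrinv : ∀ᶠ x in 𝓝 c, H (g (x, κ)) = (x, κ) := by
    have ht : Tendsto (fun x : Fin l → ℝ => (x, κ)) (𝓝 c) (𝓝 (c, κ)) :=
      (continuous_id.prodMk continuous_const).tendsto c
    have := hH.eventually_right_inverse
    rw [hHce] at this
    exact ht.eventually this
  -- the local solution φ
  set φ : (Fin l → ℝ) → ℝ := fun x => (g (x, κ)).2 with hφdef
  have hφc : φ c = e := by rw [hφdef]; simp [hgck]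
  set inlL : (Fin l → ℝ) →L[ℝ] ((Fin l → ℝ) × ℝ) :=
    (ContinuousLinearMap.id ℝ (Fin l → ℝ)).prod 0 with hinlL
  have hinlapply : ∀ u : Fin l → ℝ, inlL u = (u, 0) := fun u => rfl
  have hpairD : HasFDerivAt (fun x : Fin l → ℝ => (x, κ)) inlL c :=
    HasFDerivAt.prodMk (hasFDerivAt_id c) (hasFDerivAt_const κ c)
  set Dφ : (Fin l → ℝ) →L[ℝ] ℝ :=
    sndL.comp ((A.symm : ((Fin l → ℝ) × ℝ) →L[ℝ] ((Fin l → ℝ) × ℝ)).comp inlL) with hDφdef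
  have hφD : HasFDerivAt φ Dφ c := by
    rw [hDφdef]
    exact (sndL.hasFDerivAt).comp c ((hgstrict.hasFDerivAt).comp c hpairD)
  have hDφapply : ∀ u : Fin l → ℝ, Dφ u = -((P + e * S)⁻¹ * Gx u) := by
    intro u
    rw [hDφdef]
    simp only [ContinuousLinearMap.coe_comp', Function.comp_apply, hinlapply, hAsymm,
      hinvapply, hsndL, ContinuousLinearMap.coe_snd']
    ring
  -- eventual facts
  have hφpos : ∀ᶠ x in 𝓝 c, 0 < φ x := by
    have hcont : ContinuousAt φ c := hφD.continuousAt
    have : Tendsto φ (𝓝 c) (𝓝 e) := by rw [← hφc]; exact hcont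
    exact this.eventually (eventually_gt_nhds he)
  have hφeq : ∀ᶠ x in 𝓝 c, φ x * ∏ j, (x j + φ x) = κ := by
    filter_upwards [hrinv] with x hx
    have h1 : (g (x, κ)).1 = x := congrArg Prod.fst hx
    have h2 : (g (x, κ)).2 * ∏ j, ((g (x, κ)).1 j + (g (x, κ)).2) = κ :=
      congrArg Prod.snd hx
    rw [h1] at h2
    exact h2
  have hev : ∀ᶠ x in 𝓝[{x : Fin l → ℝ | ∀ k, 0 ≤ x k}] c, η x = φ x := by
    filter_upwards [nhdsWithin_le_nhds hφpos, nhdsWithin_le_nhds hφeq,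
      self_mem_nhdsWithin] with x h1 h2 h3
    obtain ⟨hx1, hx2⟩ := hη x h3
    exact stmt5_uniq x h3 hx1 h1 (hx2.trans h2.symm)
  -- derivative of the surrogate function
  have hxj : ∀ j : Fin l, HasFDerivAt (fun x : Fin l → ℝ => x j)
      ((ContinuousLinearMap.proj j : (Fin l → ℝ) →L[ℝ] ℝ)) c :=
    fun j => hasFDerivAt_apply j c
  have hnej : ∀ j : Fin l, (fun x : Fin l → ℝ => x j + φ x) c ≠ 0 := by
    intro j
    show c j + φ c ≠ 0
    rw [hφc]
    exact (add_pos_of_nonneg_of_pos (hc j) he).ne'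
  have hterm : ∀ j : Fin l, HasFDerivAt (fun x : Fin l → ℝ => x j * Real.log (x j + φ x))
      (c j • (((fun x : Fin l → ℝ => x j + φ x) c)⁻¹ •
          ((ContinuousLinearMap.proj j : (Fin l → ℝ) →L[ℝ] ℝ) + Dφ)) +
        Real.log ((fun x : Fin l → ℝ => x j + φ x) c) •
          (ContinuousLinearMap.proj j : (Fin l → ℝ) →L[ℝ] ℝ)) c :=
    fun j => (hxj j).mul (((hxj j).add hφD).log (hnej j))
  have hsumD := HasFDerivAt.fun_sum (u := Finset.univ) (fun j _ => hterm j)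
  have hμt := (hφD.const_mul ((l : ℝ) + 1)).sub hsumD
  -- now conclude
  refine ⟨_, (hμt.hasFDerivWithinAt).congr_of_eventuallyEq ?_ ?_, ?_⟩
  · filter_upwards [hev] with x hx
    rw [hx]
    rfl
  · show _ = _
    simp only [Pi.sub_apply]
    rw [hφc]
  · intro k
    have hGxk : Gx (Pi.single k 1) = e * Q k := by
      rw [hGxapply]
      simp [Pi.single_apply, mul_ite, Finset.sum_ite_eq']
    simp only [ContinuousLinearMap.coe_sub', Pi.sub_apply, ContinuousLinearMap.coe_smul',
      Pi.smul_apply, ContinuousLinearMap.sum_apply, ContinuousLinearMap.add_apply,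
      ContinuousLinearMap.smul_apply, ContinuousLinearMap.proj_apply, smul_eq_mul]
    rw [hφc]
    set t := Dφ (Pi.single k 1) with htdef
    have ht : t = -((P + e * S)⁻¹ * (e * Q k)) := by rw [htdef, hDφapply, hGxk]
    have hcc : ∀ j, c j * (c j + e)⁻¹ = 1 - e * Q j / P := by
      intro j
      have hne : c j + e ≠ 0 := (add_pos_of_nonneg_of_pos (hc j) he).ne'
      rw [← hQP j]
      field_simp [hne, (hQpos j).ne']
      ring
    have hsums : ∑ j, c j * (c j + e)⁻¹ = (l : ℝ) - e * S / P := by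
      rw [Finset.sum_congr rfl fun j _ => hcc j, Finset.sum_sub_distrib]
      rw [Finset.sum_const, Finset.card_univ, Fintype.card_fin]
      rw [hSdef, Finset.mul_sum, Finset.sum_div]
      simp [nsmul_eq_mul]
    have hsumsplit : ∑ j, (c j * ((c j + e)⁻¹ * ((Pi.single k 1 : Fin l → ℝ) j + t)) +
          Real.log (c j + e) * (Pi.single k 1 : Fin l → ℝ) j)
        = c k * (c k + e)⁻¹ + (∑ j, c j * (c j + e)⁻¹) * t + Real.log (c k + e) := by
      rw [Finset.sum_add_distrib]
      have h2 : ∑ j, Real.log (c j + e) * (Pi.single k 1 : Fin l → ℝ) j = Real.log (c k + e) := by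
        simp [Pi.single_apply, mul_ite, Finset.sum_ite_eq']
      have h1 : ∑ j, c j * ((c j + e)⁻¹ * ((Pi.single k 1 : Fin l → ℝ) j + t))
          = c k * (c k + e)⁻¹ + (∑ j, c j * (c j + e)⁻¹) * t := by
        have hsplit : ∀ j, c j * ((c j + e)⁻¹ * ((Pi.single k 1 : Fin l → ℝ) j + t))
            = c j * (c j + e)⁻¹ * (Pi.single k 1 : Fin l → ℝ) j + c j * (c j + e)⁻¹ * t := fun j => by ring
        rw [Finset.sum_congr rfl fun j _ => hsplit j, Finset.sum_add_distrib, ← Finset.sum_mul]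
        congr 1
        simp [Pi.single_apply, mul_ite, Finset.sum_ite_eq']
      rw [h1, h2]
    rw [hsumsplit, hcc k, hsums, ht]
    have hgyne : P + e * S ≠ 0 := hgy.ne'
    have hPne : P ≠ 0 := hP.ne'
    clear_value e P Q S
    field_simp
    ring
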